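/- Let a > 0 and b > 0, and set η̄(t) = −b ∫_0^t e^{−a²s} q^b(s) ds for t ≥ 0. Then q^b(s) > 0 for all s > 0, so η̄ is strictly decreasing on [0, ∞); moreover ∫_0^∞ e^{−a²s} q^b(s) ds = 1/(a + b), and consequently η̄(t) → −b/(b + a) as t → ∞. -/

import Mathlib

open MeasureTheory

/-- The complementary error function `erfc(s) = (2/√π) ∫_s^∞ e^{−τ²} dτ`. -/
noncomputable def erfc (s : ℝ) : ℝ :=
  (2 / Real.sqrt Real.pi) * ∫ τ in Set.Ioi s, Real.exp (-τ ^ 2)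

/-- `q^μ(t) = f_{1/2}^0(t) − μ e^{μ²t} erfc(μ√t)` with `f_{1/2}^0(t) = t^{-1/2}/√π`. -/
noncomputable def qFun (μ t : ℝ) : ℝ :=
  t ^ (-(1 : ℝ) / 2) / Real.sqrt Real.pi - μ * Real.exp (μ ^ 2 * t) * erfc (μ * Real.sqrt t)

open Set Filter

lemma gauss_integrableOn (x : ℝ) :
    IntegrableOn (fun τ : ℝ => Real.exp (-τ ^ 2)) (Set.Ioi x) := by
  have : Integrable (fun τ : ℝ => Real.exp (-1 * τ ^ 2)) := integrable_exp_neg_mul_sq one_pos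
  simpa using this.integrableOn

lemma gauss_mul_integrableOn (x : ℝ) :
    IntegrableOn (fun τ : ℝ => τ * Real.exp (-τ ^ 2)) (Set.Ioi x) := by
  have : Integrable (fun τ : ℝ => τ * Real.exp (-1 * τ ^ 2)) := integrable_mul_exp_neg_mul_sq one_pos
  simpa using this.integrableOn

lemma erfc_eq (x : ℝ) :
    erfc x = 1 - (2 / Real.sqrt Real.pi) * ∫ τ in (0:ℝ)..x, Real.exp (-τ ^ 2) := by
  have hI : (∫ τ in Set.Ioi (0:ℝ), Real.exp (-τ ^ 2)) = Real.sqrt Real.pi / 2 := by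
    have := integral_gaussian_Ioi 1
    simp only [neg_mul, one_mul, div_one] at this
    simpa using this
  have hsplit : ∀ u v : ℝ, u ≤ v →
      (∫ τ in Set.Ioi u, Real.exp (-τ ^ 2)) =
        (∫ τ in Set.Ioc u v, Real.exp (-τ ^ 2)) + ∫ τ in Set.Ioi v, Real.exp (-τ ^ 2) := by
    intro u v huv
    rw [← setIntegral_union (Set.Ioc_disjoint_Ioi le_rfl) measurableSet_Ioi
      ((gauss_integrableOn u).mono Set.Ioc_subset_Ioi_self le_rfl) (gauss_integrableOn v),
      Set.Ioc_union_Ioi_eq_Ioi huv]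
  have hpi : Real.sqrt Real.pi ≠ 0 := by positivity
  rcases le_total 0 x with hx | hx
  · rw [intervalIntegral.integral_of_le hx]
    have := hsplit 0 x hx
    rw [hI] at this
    unfold erfc
    rw [show (∫ τ in Set.Ioi x, Real.exp (-τ ^ 2))
        = Real.sqrt Real.pi / 2 - ∫ τ in Set.Ioc 0 x, Real.exp (-τ ^ 2) by linarith]
    field_simp
  · rw [intervalIntegral.integral_symm, intervalIntegral.integral_of_le hx]
    have := hsplit x 0 hx
    rw [hI] at this
    unfold erfc
    rw [this]
    field_simp
    ring

lemma continuous_gauss : Continuous (fun τ : ℝ => Real.exp (-τ ^ 2)) := by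
  continuity

lemma hasDerivAt_erfc (x : ℝ) :
    HasDerivAt erfc (-(2 / Real.sqrt Real.pi * Real.exp (-x ^ 2))) x := by
  have h1 : HasDerivAt (fun u : ℝ => ∫ τ in (0:ℝ)..u, Real.exp (-τ ^ 2))
      (Real.exp (-x ^ 2)) x := (continuous_gauss.integral_hasStrictDerivAt 0 x).hasDerivAt
  have h2 := ((h1.const_mul (2 / Real.sqrt Real.pi)).const_sub 1)
  have he : erfc = fun u => 1 - (2 / Real.sqrt Real.pi) * ∫ τ in (0:ℝ)..u, Real.exp (-τ ^ 2) := by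
    funext u; exact erfc_eq u
  rw [he]
  convert h2 using 1

lemma continuous_erfc : Continuous erfc :=
  continuous_iff_continuousAt.mpr fun x => (hasDerivAt_erfc x).continuousAt

lemma erfc_zero : erfc 0 = 1 := by
  rw [erfc_eq]; simp

lemma erfc_pos (x : ℝ) : 0 < erfc x := by
  unfold erfc
  apply mul_pos (by positivity)
  rw [setIntegral_pos_iff_support_of_nonneg_ae]
  · have hsub : Set.Ioi x ⊆ (Function.support fun τ : ℝ => Real.exp (-τ ^ 2)) ∩ Set.Ioi x :=
      fun y hy => ⟨by simp [Real.exp_ne_zero], hy⟩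
    exact lt_of_lt_of_le (MeasureTheory.Measure.measure_Ioi_pos _ x) (measure_mono hsub)
  · filter_upwards with y using (Real.exp_pos _).le
  · exact gauss_integrableOn x

lemma integral_Ioi_self_mul_gauss (x : ℝ) :
    (∫ τ in Set.Ioi x, τ * Real.exp (-τ ^ 2)) = Real.exp (-x ^ 2) / 2 := by
  have hderiv : ∀ y ∈ Set.Ioi x, HasDerivAt (fun τ : ℝ => -Real.exp (-τ ^ 2) / 2)
      (y * Real.exp (-y ^ 2)) y := by
    intro y _
    have h1 : HasDerivAt (fun τ : ℝ => -τ ^ 2) (-(2 * y)) y := by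
      exact ((hasDerivAt_pow 2 y).neg).congr_deriv (by norm_num)
    have h2 := (h1.exp).neg.div_const 2
    refine h2.congr_deriv (Eq.symm ?_)
    ring
  have hlim : Tendsto (fun τ : ℝ => -Real.exp (-τ ^ 2) / 2) atTop (nhds 0) := by
    have : Tendsto (fun τ : ℝ => Real.exp (-τ ^ 2)) atTop (nhds 0) := by
      apply Real.tendsto_exp_atBot.comp
      apply tendsto_neg_atBot_iff.mpr
      exact tendsto_pow_atTop (by norm_num)
    simpa using (this.neg.div_const 2)
  have hcont : ContinuousWithinAt (fun τ : ℝ => -Real.exp (-τ ^ 2) / 2) (Set.Ici x) x :=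
    (Continuous.continuousWithinAt (by continuity))
  have := integral_Ioi_of_hasDerivAt_of_tendsto hcont hderiv (gauss_mul_integrableOn x) hlim
  rw [this]; ring

lemma erfc_lt (x : ℝ) (hx : 0 < x) :
    erfc x < Real.exp (-x ^ 2) / (x * Real.sqrt Real.pi) := by
  have key : (∫ τ in Set.Ioi x, Real.exp (-τ ^ 2)) < Real.exp (-x ^ 2) / (2 * x) := by
    have hint : IntegrableOn (fun τ : ℝ => (τ - x) * Real.exp (-τ ^ 2)) (Set.Ioi x) := by
      apply Integrable.congr
        ((gauss_mul_integrableOn x).sub ((gauss_integrableOn x).const_mul x))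
      filter_upwards with y
      simp only [Pi.sub_apply]
      ring
    have hpos : 0 < ∫ τ in Set.Ioi x, (τ - x) * Real.exp (-τ ^ 2) := by
      rw [setIntegral_pos_iff_support_of_nonneg_ae]
      · have hsub : Set.Ioi x ⊆
            (Function.support fun τ : ℝ => (τ - x) * Real.exp (-τ ^ 2)) ∩ Set.Ioi x := by
          intro y hy
          refine ⟨?_, hy⟩
          have h1 : (0:ℝ) < (y - x) * Real.exp (-y ^ 2) := by
            have := Real.exp_pos (-y ^ 2); nlinarith [hy.out]
          exact h1.ne'
        exact lt_of_lt_of_le (MeasureTheory.Measure.measure_Ioi_pos _ x) (measure_mono hsub)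
      · rw [EventuallyLE, ae_restrict_iff' measurableSet_Ioi]
        filter_upwards with y hy
        have := Real.exp_pos (-y ^ 2)
        show (0:ℝ) ≤ (y - x) * Real.exp (-y ^ 2)
        nlinarith [hy.out]
      · exact hint
    have hsub : (∫ τ in Set.Ioi x, (τ - x) * Real.exp (-τ ^ 2))
        = Real.exp (-x ^ 2) / 2 - x * ∫ τ in Set.Ioi x, Real.exp (-τ ^ 2) := by
      rw [show (fun τ : ℝ => (τ - x) * Real.exp (-τ ^ 2))
          = (fun τ : ℝ => τ * Real.exp (-τ ^ 2) - x * Real.exp (-τ ^ 2)) by funext τ; ring]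
      rw [integral_sub (gauss_mul_integrableOn x) ((gauss_integrableOn x).const_mul x),
        integral_Ioi_self_mul_gauss, integral_const_mul]
    rw [hsub] at hpos
    rw [lt_div_iff₀ (by linarith : (0:ℝ) < 2 * x)]
    nlinarith
  unfold erfc
  have hpi : (0:ℝ) < Real.sqrt Real.pi := Real.sqrt_pos.mpr Real.pi_pos
  rw [show Real.exp (-x ^ 2) / (x * Real.sqrt Real.pi)
      = (2 / Real.sqrt Real.pi) * (Real.exp (-x ^ 2) / (2 * x)) by field_simp]
  exact mul_lt_mul_of_pos_left key (by positivity)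

lemma rpow_half {s : ℝ} (hs : 0 < s) : s ^ (-(1:ℝ)/2) = (Real.sqrt s)⁻¹ := by
  rw [show (-(1:ℝ)/2) = -(1/2 : ℝ) by ring, Real.rpow_neg hs.le, ← Real.sqrt_eq_rpow]


lemma hasDerivAt_erfc_sqrt (c : ℝ) {s : ℝ} (hs : 0 < s) :
    HasDerivAt (fun u => erfc (c * Real.sqrt u))
      (-(c * Real.exp (-(c ^ 2 * s)) / (Real.sqrt Real.pi * Real.sqrt s))) s := by
  have hss : 0 < Real.sqrt s := Real.sqrt_pos.mpr hs
  have hpi : 0 < Real.sqrt Real.pi := Real.sqrt_pos.mpr Real.pi_pos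
  have h1 : HasDerivAt (fun u : ℝ => c * Real.sqrt u) (c * (1 / (2 * Real.sqrt s))) s :=
    (Real.hasDerivAt_sqrt hs.ne').const_mul c
  have h2 := (hasDerivAt_erfc (c * Real.sqrt s)).comp s h1
  have hsq : (c * Real.sqrt s) ^ 2 = c ^ 2 * s := by
    rw [mul_pow, Real.sq_sqrt hs.le]
  rw [hsq] at h2
  refine h2.congr_deriv (Eq.symm ?_)
  field_simp

lemma qFun_pos {b : ℝ} (hb : 0 < b) {s : ℝ} (hs : 0 < s) : 0 < qFun b s := by
  have hss : 0 < Real.sqrt s := Real.sqrt_pos.mpr hs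
  have hpi : 0 < Real.sqrt Real.pi := Real.sqrt_pos.mpr Real.pi_pos
  have hx : 0 < b * Real.sqrt s := mul_pos hb hss
  have hlt := erfc_lt _ hx
  have hsq : (b * Real.sqrt s) ^ 2 = b ^ 2 * s := by rw [mul_pow, Real.sq_sqrt hs.le]
  rw [hsq] at hlt
  unfold qFun
  rw [rpow_half hs]
  have h2 : b * Real.exp (b ^ 2 * s) * erfc (b * Real.sqrt s)
      < b * Real.exp (b ^ 2 * s) *
        (Real.exp (-(b ^ 2 * s)) / (b * Real.sqrt s * Real.sqrt Real.pi)) := by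
    apply mul_lt_mul_of_pos_left hlt (by positivity)
  have h3 : b * Real.exp (b ^ 2 * s) *
      (Real.exp (-(b ^ 2 * s)) / (b * Real.sqrt s * Real.sqrt Real.pi))
      = (Real.sqrt s)⁻¹ / Real.sqrt Real.pi := by
    rw [Real.exp_neg]
    field_simp
  rw [h3] at h2
  linarith

lemma tendsto_aux (p m c : ℝ) (hc : 0 < c) (hm : m < c ^ 2) :
    Filter.Tendsto (fun s : ℝ => s ^ p * Real.exp (m * s) * erfc (c * Real.sqrt s))
      atTop (nhds 0) := by
  have hb : 0 < c ^ 2 - m := by linarith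
  have hpi : 0 < Real.sqrt Real.pi := Real.sqrt_pos.mpr Real.pi_pos
  have hmain := (tendsto_rpow_mul_exp_neg_mul_atTop_nhds_zero p _ hb).mul_const
    (1 / (c * Real.sqrt Real.pi))
  rw [zero_mul] at hmain
  apply tendsto_of_tendsto_of_tendsto_of_le_of_le' tendsto_const_nhds hmain
  · filter_upwards [eventually_ge_atTop (1:ℝ)] with s hs
    have h0 : (0:ℝ) < s := by linarith
    exact mul_nonneg (mul_nonneg (Real.rpow_nonneg h0.le p) (Real.exp_pos _).le)
      (erfc_pos _).le
  · filter_upwards [eventually_ge_atTop (1:ℝ)] with s hs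
    have h0 : (0:ℝ) < s := by linarith
    have hss : 1 ≤ Real.sqrt s := by
      rw [show (1:ℝ) = Real.sqrt 1 by simp]
      exact Real.sqrt_le_sqrt hs
    have hx : 0 < c * Real.sqrt s := by positivity
    have hlt := (erfc_lt _ hx).le
    have hsq : (c * Real.sqrt s) ^ 2 = c ^ 2 * s := by rw [mul_pow, Real.sq_sqrt h0.le]
    rw [hsq] at hlt
    have hexp : Real.exp (m * s) * Real.exp (-(c ^ 2 * s)) = Real.exp (-(c ^ 2 - m) * s) := by
      rw [← Real.exp_add]; ring_nf
    calc s ^ p * Real.exp (m * s) * erfc (c * Real.sqrt s)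
        ≤ s ^ p * Real.exp (m * s) *
          (Real.exp (-(c ^ 2 * s)) / (c * Real.sqrt s * Real.sqrt Real.pi)) := by
          apply mul_le_mul_of_nonneg_left hlt
          exact mul_nonneg (Real.rpow_nonneg h0.le p) (Real.exp_pos _).le
      _ ≤ s ^ p * Real.exp (m * s) *
          (Real.exp (-(c ^ 2 * s)) / (c * Real.sqrt Real.pi)) := by
          apply mul_le_mul_of_nonneg_left _
            (mul_nonneg (Real.rpow_nonneg h0.le p) (Real.exp_pos _).le)
          apply div_le_div_of_nonneg_left (Real.exp_pos _).le (by positivity)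
          nlinarith [mul_nonneg (mul_pos hc hpi).le (sub_nonneg.mpr hss)]
      _ = s ^ p * Real.exp (-(c ^ 2 - m) * s) * (1 / (c * Real.sqrt Real.pi)) := by
          rw [mul_assoc (s ^ p), div_eq_mul_inv, ← mul_assoc (Real.exp (m * s)), hexp]
          ring

lemma h_contOn (a b : ℝ) : ContinuousOn (fun s => Real.exp (-a ^ 2 * s) * qFun b s)
    (Set.Ioi (0:ℝ)) := by
  intro s hs
  apply ContinuousAt.continuousWithinAt
  have h1 : ContinuousAt (fun u : ℝ => u ^ (-(1:ℝ)/2)) s :=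
    Real.continuousAt_rpow_const s _ (Or.inl (ne_of_gt hs))
  have h2 : Continuous fun u : ℝ => b * Real.exp (b ^ 2 * u) * erfc (b * Real.sqrt u) := by
    exact (continuous_const.mul (Real.continuous_exp.comp (continuous_const.mul continuous_id))).mul
      (continuous_erfc.comp (continuous_const.mul Real.continuous_sqrt))
  have hq : ContinuousAt (qFun b) s := by
    unfold qFun
    exact (h1.div_const _).sub h2.continuousAt
  exact ((Real.continuous_exp.comp (continuous_const.mul continuous_id)).continuousAt).mul hq

lemma h_integrableOn (a b : ℝ) (ha : 0 < a) (hb : 0 < b) :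
    IntegrableOn (fun s => Real.exp (-a ^ 2 * s) * qFun b s) (Set.Ioi (0:ℝ)) := by
  set h : ℝ → ℝ := fun s => Real.exp (-a ^ 2 * s) * qFun b s with hh
  have hpi : 0 < Real.sqrt Real.pi := Real.sqrt_pos.mpr Real.pi_pos
  have hpos : ∀ s : ℝ, 0 < s → 0 < h s := fun s hs =>
    mul_pos (Real.exp_pos _) (qFun_pos hb hs)
  have hqle : ∀ s : ℝ, 0 < s →
      |h s| ≤ Real.exp (-a ^ 2 * s) * (s ^ (-(1:ℝ)/2) / Real.sqrt Real.pi) := by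
    intro s hs
    rw [abs_of_pos (hpos s hs)]
    apply mul_le_mul_of_nonneg_left _ (Real.exp_pos _).le
    unfold qFun
    have h1 := erfc_pos (b * Real.sqrt s)
    have h2 := Real.exp_pos (b ^ 2 * s)
    nlinarith [mul_pos (mul_pos hb h2) h1]
  rw [show Set.Ioi (0:ℝ) = Set.Ioc 0 1 ∪ Set.Ioi 1 by
    rw [Set.Ioc_union_Ioi_eq_Ioi]; norm_num]
  apply IntegrableOn.union
  · -- on Ioc 0 1
    have hg : IntegrableOn (fun s : ℝ => s ^ (-(1:ℝ)/2) / Real.sqrt Real.pi) (Set.Ioc 0 1) := by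
      have := (intervalIntegral.intervalIntegrable_rpow' (a := 0) (b := 1)
        (r := -(1:ℝ)/2) (by norm_num)).div_const (Real.sqrt Real.pi)
      rwa [intervalIntegrable_iff_integrableOn_Ioc_of_le (by norm_num)] at this
    apply Integrable.mono hg
    · exact ((h_contOn a b).mono Set.Ioc_subset_Ioi_self).aestronglyMeasurable measurableSet_Ioc
    · rw [ae_restrict_iff' measurableSet_Ioc]
      filter_upwards with s hs
      have hs0 : 0 < s := hs.1
      calc ‖h s‖ ≤ Real.exp (-a ^ 2 * s) * (s ^ (-(1:ℝ)/2) / Real.sqrt Real.pi) := hqle s hs0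
        _ ≤ 1 * (s ^ (-(1:ℝ)/2) / Real.sqrt Real.pi) := by
            apply mul_le_mul_of_nonneg_right _ (by positivity)
            rw [show (1:ℝ) = Real.exp 0 by simp]
            exact Real.exp_le_exp.mpr (by nlinarith)
        _ ≤ ‖s ^ (-(1:ℝ)/2) / Real.sqrt Real.pi‖ := by
            rw [one_mul, Real.norm_eq_abs, abs_of_nonneg (by positivity)]
  · -- on Ioi 1
    have hg : IntegrableOn (fun s : ℝ => Real.exp (-a ^ 2 * s) * (1 / Real.sqrt Real.pi))
        (Set.Ioi 1) := (exp_neg_integrableOn_Ioi 1 (by positivity : (0:ℝ) < a ^ 2)).mul_const _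
    apply Integrable.mono hg
    · exact ((h_contOn a b).mono (t := Set.Ioi (1:ℝ)) (fun x (hx : x ∈ Set.Ioi (1:ℝ)) => show (0:ℝ) < x from lt_trans one_pos hx)).aestronglyMeasurable
        measurableSet_Ioi
    · rw [ae_restrict_iff' measurableSet_Ioi]
      filter_upwards with s hs
      have hs0 : (0:ℝ) < s := lt_trans one_pos hs
      calc ‖h s‖ ≤ Real.exp (-a ^ 2 * s) * (s ^ (-(1:ℝ)/2) / Real.sqrt Real.pi) := hqle s hs0
        _ ≤ Real.exp (-a ^ 2 * s) * (1 / Real.sqrt Real.pi) := by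
            apply mul_le_mul_of_nonneg_left _ (Real.exp_pos _).le
            gcongr
            exact Real.rpow_le_one_of_one_le_of_nonpos hs.out.le (by norm_num)
        _ ≤ ‖Real.exp (-a ^ 2 * s) * (1 / Real.sqrt Real.pi)‖ := by
            rw [Real.norm_eq_abs, abs_of_nonneg (by positivity)]

lemma integral_h (a b : ℝ) (ha : 0 < a) (hb : 0 < b) :
    ∫ s in Set.Ioi (0:ℝ), Real.exp (-a ^ 2 * s) * qFun b s = 1 / (a + b) := by
  have hint := h_integrableOn a b ha hb
  have hpi : 0 < Real.sqrt Real.pi := Real.sqrt_pos.mpr Real.pi_pos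
  by_cases hab : a = b
  · subst hab
    set H : ℝ → ℝ := fun s => -a * (s * erfc (a * Real.sqrt s))
      + Real.sqrt s * Real.exp (-a ^ 2 * s) / Real.sqrt Real.pi
      - erfc (a * Real.sqrt s) / (2 * a) + 1 / (2 * a) with hH
    have hderiv : ∀ s ∈ Set.Ioi (0:ℝ),
        HasDerivAt H (Real.exp (-a ^ 2 * s) * qFun a s) s := by
      intro s hs
      have hs0 : (0:ℝ) < s := hs
      have hss : 0 < Real.sqrt s := Real.sqrt_pos.mpr hs0
      have h1 := hasDerivAt_erfc_sqrt a hs0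
      have hid : HasDerivAt (fun u : ℝ => u) 1 s := hasDerivAt_id s
      have hT1 : HasDerivAt (fun u : ℝ => -a * (u * erfc (a * Real.sqrt u)))
          (-a * (1 * erfc (a * Real.sqrt s) +
            s * (-(a * Real.exp (-(a ^ 2 * s)) / (Real.sqrt Real.pi * Real.sqrt s))))) s :=
        (hid.mul h1).const_mul (-a)
      have hexp : HasDerivAt (fun u : ℝ => Real.exp (-a ^ 2 * u))
          (Real.exp (-a ^ 2 * s) * (-a ^ 2 * 1)) s := ((hid.const_mul (-a ^ 2)).exp)
      have hT2 : HasDerivAt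
          (fun u : ℝ => Real.sqrt u * Real.exp (-a ^ 2 * u) / Real.sqrt Real.pi)
          ((1 / (2 * Real.sqrt s) * Real.exp (-a ^ 2 * s) +
            Real.sqrt s * (Real.exp (-a ^ 2 * s) * (-a ^ 2 * 1))) / Real.sqrt Real.pi) s :=
        ((Real.hasDerivAt_sqrt hs0.ne').mul hexp).div_const _
      have hT3 : HasDerivAt (fun u : ℝ => erfc (a * Real.sqrt u) / (2 * a))
          ((-(a * Real.exp (-(a ^ 2 * s)) / (Real.sqrt Real.pi * Real.sqrt s))) / (2 * a)) s :=
        h1.div_const _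
      have hAll := ((hT1.add hT2).sub hT3).add_const (1 / (2 * a))
      rw [hH]
      refine hAll.congr_deriv (Eq.symm ?_)
      unfold qFun
      rw [rpow_half hs0]
      rw [show Real.exp (-(a ^ 2 * s)) = (Real.exp (a ^ 2 * s))⁻¹ from Real.exp_neg _,
        show Real.exp (-a ^ 2 * s) = (Real.exp (a ^ 2 * s))⁻¹ by rw [neg_mul, Real.exp_neg]]
      have hE := Real.exp_pos (a ^ 2 * s)
      have hsq2 : Real.sqrt s ^ 2 = s := Real.sq_sqrt hs0.le
      field_simp
      linear_combination (2 * a ^ 2) * hsq2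
    have hHc : Continuous H := by
      rw [hH]
      apply Continuous.add
      apply Continuous.sub
      apply Continuous.add
      · exact continuous_const.mul (continuous_id.mul
          (continuous_erfc.comp (continuous_const.mul Real.continuous_sqrt)))
      · exact (Real.continuous_sqrt.mul
          (Real.continuous_exp.comp (continuous_const.mul continuous_id))).div_const _
      · exact (continuous_erfc.comp (continuous_const.mul Real.continuous_sqrt)).div_const _
      · exact continuous_const
    have hH0 : H 0 = 0 := by
      rw [hH]
      simp [Real.sqrt_zero, erfc_zero]
    have ht1 : Filter.Tendsto (fun s : ℝ => s * erfc (a * Real.sqrt s)) atTop (nhds 0) :=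
      (tendsto_aux 1 0 a ha (by positivity)).congr (fun s => by
        rw [Real.rpow_one, zero_mul, Real.exp_zero, mul_one])
    have ht2 : Filter.Tendsto (fun s : ℝ => Real.sqrt s * Real.exp (-a ^ 2 * s))
        atTop (nhds 0) := by
      have h := tendsto_rpow_mul_exp_neg_mul_atTop_nhds_zero (1/2) (a ^ 2) (by positivity)
      apply h.congr (fun s => ?_)
      rw [← Real.sqrt_eq_rpow, neg_mul]
    have ht3 : Filter.Tendsto (fun s : ℝ => erfc (a * Real.sqrt s)) atTop (nhds 0) :=
      (tendsto_aux 0 0 a ha (by positivity)).congr (fun s => by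
        rw [Real.rpow_zero, zero_mul, Real.exp_zero, one_mul, one_mul])
    have hlim : Filter.Tendsto H atTop (nhds (1 / (2 * a))) := by
      rw [hH]
      have h := (((ht1.const_mul (-a)).add (ht2.div_const (Real.sqrt Real.pi))).sub
        (ht3.div_const (2 * a))).add_const (1 / (2 * a))
      convert h using 2
      ring
    have key := integral_Ioi_of_hasDerivAt_of_tendsto (f := H)
      (f' := fun s => Real.exp (-a ^ 2 * s) * qFun a s)
      hHc.continuousWithinAt hderiv hint hlim
    rw [key, hH0, sub_zero]
    ring
  · have hba' : b ^ 2 - a ^ 2 ≠ 0 := by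
      intro h
      have h0 : (b - a) * (b + a) = 0 := by nlinarith
      rcases mul_eq_zero.mp h0 with h1 | h2
      · exact hab (by linarith)
      · nlinarith
    set H : ℝ → ℝ := fun s => ((b - a) + a * erfc (a * Real.sqrt s)
      - b * (Real.exp ((b ^ 2 - a ^ 2) * s) * erfc (b * Real.sqrt s))) / (b ^ 2 - a ^ 2) with hH
    have hderiv : ∀ s ∈ Set.Ioi (0:ℝ),
        HasDerivAt H (Real.exp (-a ^ 2 * s) * qFun b s) s := by
      intro s hs
      have hs0 : (0:ℝ) < s := hs
      have hss : 0 < Real.sqrt s := Real.sqrt_pos.mpr hs0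
      have h1 := hasDerivAt_erfc_sqrt a hs0
      have h2 := hasDerivAt_erfc_sqrt b hs0
      have h3 : HasDerivAt (fun u : ℝ => Real.exp ((b ^ 2 - a ^ 2) * u))
          (Real.exp ((b ^ 2 - a ^ 2) * s) * ((b ^ 2 - a ^ 2) * 1)) s :=
        ((hasDerivAt_id s).const_mul (b ^ 2 - a ^ 2)).exp
      have hAll := (((h1.const_mul a).const_add (b - a)).sub
        ((h3.mul h2).const_mul b)).div_const (b ^ 2 - a ^ 2)
      rw [hH]
      refine hAll.congr_deriv (Eq.symm ?_)
      unfold qFun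
      rw [rpow_half hs0]
      have e1 : Real.exp (-(a ^ 2 * s)) = (Real.exp (a ^ 2 * s))⁻¹ := Real.exp_neg _
      have e2 : Real.exp (-a ^ 2 * s) = (Real.exp (a ^ 2 * s))⁻¹ := by
        rw [neg_mul, Real.exp_neg]
      have e3 : Real.exp (-(b ^ 2 * s)) = (Real.exp (b ^ 2 * s))⁻¹ := Real.exp_neg _
      have e4 : Real.exp ((b ^ 2 - a ^ 2) * s)
          = Real.exp (b ^ 2 * s) * (Real.exp (a ^ 2 * s))⁻¹ := by
        rw [← Real.exp_neg, ← Real.exp_add]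
        ring_nf
      rw [e1, e2, e3, e4]
      have hEa := Real.exp_pos (a ^ 2 * s)
      have hEb := Real.exp_pos (b ^ 2 * s)
      field_simp
      ring
    have hHc : Continuous H := by
      rw [hH]
      refine Continuous.div_const (Continuous.sub (Continuous.add continuous_const
        (continuous_const.mul (continuous_erfc.comp (continuous_const.mul Real.continuous_sqrt))))
        (continuous_const.mul ((Real.continuous_exp.comp
          (continuous_const.mul continuous_id)).mul
          (continuous_erfc.comp (continuous_const.mul Real.continuous_sqrt))))) _
    have hH0 : H 0 = 0 := by
      rw [hH]
      simp [Real.sqrt_zero, erfc_zero]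
    have ht2' : Filter.Tendsto
        (fun s : ℝ => Real.exp ((b ^ 2 - a ^ 2) * s) * erfc (b * Real.sqrt s))
        atTop (nhds 0) :=
      (tendsto_aux 0 (b ^ 2 - a ^ 2) b hb (by nlinarith)).congr (fun s => by
        rw [Real.rpow_zero, one_mul])
    have ht3 : Filter.Tendsto (fun s : ℝ => erfc (a * Real.sqrt s)) atTop (nhds 0) :=
      (tendsto_aux 0 0 a ha (by positivity)).congr (fun s => by
        rw [Real.rpow_zero, zero_mul, Real.exp_zero, one_mul, one_mul])
    have hlim : Filter.Tendsto H atTop (nhds (1 / (a + b))) := by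
      rw [hH]
      have h := (((ht3.const_mul a).const_add (b - a)).sub
        (ht2'.const_mul b)).div_const (b ^ 2 - a ^ 2)
      convert h using 2
      field_simp
      ring
    have key := integral_Ioi_of_hasDerivAt_of_tendsto (f := H)
      (f' := fun s => Real.exp (-a ^ 2 * s) * qFun b s)
      hHc.continuousWithinAt hderiv hint hlim
    rw [key, hH0, sub_zero]

/-- **Large-time behaviour, part (i).** With
`η̄(t) = −b ∫_0^t e^{−a²s} q^b(s) ds`: `q^b > 0` on `(0,∞)`, `η̄` is strictly
decreasing on `[0,∞)`, `∫_0^∞ e^{−a²s} q^b(s) ds = 1/(a+b)`, and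
`η̄(t) → −b/(b+a)` as `t → ∞`. -/
theorem stmt13 (a b : ℝ) (ha : 0 < a) (hb : 0 < b)
    (ηbar : ℝ → ℝ)
    (hηbar : ∀ t : ℝ, ηbar t = -b * ∫ s in (0 : ℝ)..t, Real.exp (-a ^ 2 * s) * qFun b s) :
    (∀ s > (0 : ℝ), 0 < qFun b s) ∧
    StrictAntiOn ηbar (Set.Ici 0) ∧
    (∫ s in Set.Ioi (0 : ℝ), Real.exp (-a ^ 2 * s) * qFun b s) = 1 / (a + b) ∧
    Filter.Tendsto ηbar Filter.atTop (nhds (-(b / (b + a)))) := by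
  have hint := h_integrableOn a b ha hb
  have hIoi := integral_h a b ha hb
  have hpos : ∀ s > (0:ℝ), 0 < qFun b s := fun s hs => qFun_pos hb hs
  have hii : ∀ t1 t2 : ℝ, 0 ≤ t1 → t1 ≤ t2 →
      IntervalIntegrable (fun s => Real.exp (-a ^ 2 * s) * qFun b s) volume t1 t2 := by
    intro t1 t2 h0 h12
    rw [intervalIntegrable_iff_integrableOn_Ioc_of_le h12]
    exact hint.mono (fun x hx => lt_of_le_of_lt h0 hx.1) le_rfl
  refine ⟨hpos, ?_, hIoi, ?_⟩
  · intro t1 ht1 t2 ht2 h12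
    rw [hηbar t1, hηbar t2]
    have hsplit := intervalIntegral.integral_interval_sub_left
      (hii 0 t2 le_rfl (le_trans ht1.out h12.le)) (hii 0 t1 le_rfl ht1.out)
    have hposint : 0 < ∫ s in t1..t2, Real.exp (-a ^ 2 * s) * qFun b s :=
      intervalIntegral.intervalIntegral_pos_of_pos_on (hii t1 t2 ht1.out h12.le)
        (fun x hx => mul_pos (Real.exp_pos _) (qFun_pos hb (lt_of_le_of_lt ht1.out hx.1)))
        h12
    nlinarith [hsplit, mul_pos hb hposint]
  · have ht := (intervalIntegral_tendsto_integral_Ioi 0 hint tendsto_id).const_mul (-b)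
    rw [hIoi] at ht
    have hval : -b * (1 / (a + b)) = -(b / (b + a)) := by
      rw [mul_one_div, neg_div, add_comm a b]
    rw [hval] at ht
    exact ht.congr (fun t => (hηbar t).symm)
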